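/- Let E be a finite-dimensional real normed vector space, M ⊆ E, and f : M → ℝ nonnegative, with convex roof f̂ on the convex hull of M. Suppose x = Σᵢ pᵢ xᵢ is a finite convex combination of points xᵢ ∈ M with all weights pᵢ > 0 and Σᵢ pᵢ = 1, and suppose this decomposition attains the convex roof, i.e. f̂(x) = Σᵢ pᵢ f(xᵢ). Then f̂ is linear on the convex hull of {xᵢ}: for every choice of weights tᵢ ≥ 0 with Σᵢ tᵢ = 1 one has f̂(Σᵢ tᵢ xᵢ) = Σᵢ tᵢ f(xᵢ). -/

import Mathlib

open scoped BigOperators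

/-- The convex roof of `f : M → ℝ` over the convex hull of `M`:
`f̂(x) = inf { ∑ᵢ pᵢ f(yᵢ) : yᵢ ∈ M, pᵢ ≥ 0, ∑ᵢ pᵢ = 1, ∑ᵢ pᵢ yᵢ = x }`. -/
noncomputable def convexRoof {E : Type*} [NormedAddCommGroup E] [NormedSpace ℝ E]
    (M : Set E) (f : E → ℝ) (x : E) : ℝ :=
  sInf { r : ℝ | ∃ (n : ℕ) (p : Fin n → ℝ) (y : Fin n → E),
    (∀ i, 0 ≤ p i) ∧ (∑ i, p i = 1) ∧ (∀ i, y i ∈ M) ∧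
    (∑ i, p i • y i = x) ∧ r = ∑ i, p i * f (y i) }

/-- If a finite convex decomposition `x = ∑ᵢ pᵢ xᵢ` with `xᵢ ∈ M`, `pᵢ > 0`, attains the
convex roof of a nonnegative function `f`, then the convex roof is linear on the convex
hull of the `xᵢ`. -/
theorem convexRoof_linear_on_optimal_decomposition
    {E : Type*} [NormedAddCommGroup E] [NormedSpace ℝ E] [FiniteDimensional ℝ E]
    (M : Set E) (f : E → ℝ) (hf : ∀ y ∈ M, 0 ≤ f y)
    {n : ℕ} (p : Fin n → ℝ) (x : Fin n → E)
    (hp : ∀ i, 0 < p i) (hps : ∑ i, p i = 1) (hxM : ∀ i, x i ∈ M)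
    (hopt : convexRoof M f (∑ i, p i • x i) = ∑ i, p i * f (x i))
    (t : Fin n → ℝ) (ht : ∀ i, 0 ≤ t i) (hts : ∑ i, t i = 1) :
    convexRoof M f (∑ i, t i • x i) = ∑ i, t i * f (x i) := by
  classical
  have hne : Nonempty (Fin n) := by
    rcases n with _ | n
    · simp at hps
    · exact ⟨0⟩
  obtain ⟨i0⟩ := hne
  -- ε = min of the pᵢ
  set ε : ℝ := Finset.univ.inf' (show (Finset.univ : Finset (Fin n)).Nonempty from ⟨i0, Finset.mem_univ i0⟩) p with hε_def
  have hε_pos : 0 < ε := by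
    rw [hε_def, Finset.lt_inf'_iff]
    exact fun i _ => hp i
  have hε_le : ∀ i, ε ≤ p i := fun i => Finset.inf'_le _ (Finset.mem_univ i)
  have ht1 : ∀ i, t i ≤ 1 := by
    intro i
    rw [← hts]
    exact Finset.single_le_sum (fun j _ => ht j) (Finset.mem_univ i)
  have hw : ∀ i, 0 ≤ p i - ε * t i := by
    intro i
    nlinarith [hε_le i, ht i, ht1 i, hε_pos]
  set S : E → Set ℝ := fun w => {r : ℝ | ∃ (m : ℕ) (q : Fin m → ℝ) (z : Fin m → E),
    (∀ j, 0 ≤ q j) ∧ (∑ j, q j = 1) ∧ (∀ j, z j ∈ M) ∧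
    (∑ j, q j • z j = w) ∧ r = ∑ j, q j * f (z j)} with hS
  have hroof : ∀ w, convexRoof M f w = sInf (S w) := fun w => rfl
  have hSnn : ∀ w, ∀ r ∈ S w, (0:ℝ) ≤ r := by
    rintro w r ⟨m, q, z, hq, -, hz, -, rfl⟩
    exact Finset.sum_nonneg fun j _ => mul_nonneg (hq j) (hf _ (hz j))
  have hbdd : ∀ w, BddBelow (S w) := fun w => ⟨0, fun r hr => hSnn w r hr⟩
  have hYmem : (∑ i, t i * f (x i)) ∈ S (∑ i, t i • x i) :=
    ⟨n, t, x, ht, hts, hxM, rfl, rfl⟩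
  rw [hroof]
  apply le_antisymm
  · exact csInf_le (hbdd _) hYmem
  · apply le_csInf ⟨_, hYmem⟩
    rintro r ⟨m, q, z, hq, hqs, hz, hqz, rfl⟩
    -- combined decomposition of X = ∑ pᵢ • xᵢ
    have hXmem : ((∑ i, (p i - ε * t i) * f (x i)) + ε * ∑ j, q j * f (z j))
        ∈ S (∑ i, p i • x i) := by
      refine ⟨n + m, Fin.append (fun i => p i - ε * t i) (fun j => ε * q j),
        Fin.append x z, ?_, ?_, ?_, ?_, ?_⟩
      · intro k
        refine Fin.addCases (fun i => ?_) (fun j => ?_) k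
        · simpa using hw i
        · simpa using mul_nonneg hε_pos.le (hq j)
      · rw [Fin.sum_univ_add]
        simp only [Fin.append_left, Fin.append_right]
        rw [Finset.sum_sub_distrib, ← Finset.mul_sum, ← Finset.mul_sum, hps, hts, hqs]
        ring
      · intro k
        refine Fin.addCases (fun i => ?_) (fun j => ?_) k
        · simpa using hxM i
        · simpa using hz j
      · rw [Fin.sum_univ_add]
        simp only [Fin.append_left, Fin.append_right, sub_smul, mul_smul]
        rw [Finset.sum_sub_distrib, ← Finset.smul_sum, ← Finset.smul_sum, hqz]
        abel
      · rw [Fin.sum_univ_add]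
        simp only [Fin.append_left, Fin.append_right]
        rw [Finset.mul_sum]
        exact congrArg₂ (· + ·) rfl (Finset.sum_congr rfl fun j _ => by ring)
    have hle : sInf (S (∑ i, p i • x i)) ≤
        (∑ i, (p i - ε * t i) * f (x i)) + ε * ∑ j, q j * f (z j) :=
      csInf_le (hbdd _) hXmem
    rw [← hroof, hopt] at hle
    have hsplit : ∑ i, p i * f (x i)
        = (∑ i, (p i - ε * t i) * f (x i)) + ε * ∑ i, t i * f (x i) := by
      rw [Finset.mul_sum, ← Finset.sum_add_distrib]
      exact Finset.sum_congr rfl fun i _ => by ring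
    rw [hsplit] at hle
    have h2 : ε * (∑ i, t i * f (x i)) ≤ ε * (∑ j, q j * f (z j)) := by linarith
    exact le_of_mul_le_mul_left h2 hε_pos
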